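/- For any signed graph (G, σ) with n vertices, r(G,σ) + 2α(G) ≤ 2n, where r(G,σ) is the rank of the signed adjacency matrix and α(G) the independence number of the underlying graph. -/

import Mathlib

open SimpleGraph
open scoped Classical

noncomputable section

/-- The adjacency matrix of a signed graph `(G, σ)`. -/
def sAdj {V : Type*} [Fintype V] (G : SimpleGraph V) (σ : Sym2 V → ℝ) : Matrix V V ℝ :=
  fun i j => if G.Adj i j then σ s(i, j) else 0

/-- The rank of a signed graph. -/
def srank {V : Type*} [Fintype V] (G : SimpleGraph V) (σ : Sym2 V → ℝ) : ℕ :=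
  (sAdj G σ).rank

/-- The independence number of a graph. -/
def indepNum {V : Type*} (G : SimpleGraph V) : ℕ :=
  sSup {n | ∃ s : Finset V, (∀ a ∈ s, ∀ b ∈ s, ¬ G.Adj a b) ∧ s.card = n}

/-- The matching number of a graph. -/
def matchNum {V : Type*} (G : SimpleGraph V) : ℕ :=
  sSup {n | ∃ M : G.Subgraph, M.IsMatching ∧ M.edgeSet.ncard = n}

/-- The cyclomatic number `|E| - |V| + ω` of a graph (as a natural number;
the quantity is always nonnegative). -/
def cyclomatic {V : Type*} [Fintype V] (G : SimpleGraph V) : ℕ :=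
  G.edgeSet.ncard + Nat.card G.ConnectedComponent - Fintype.card V

/-- Deleting a set of vertices from a graph: the induced subgraph on the complement. -/
def vdel {V : Type*} (G : SimpleGraph V) (S : Set V) : SimpleGraph ↥(Sᶜ) :=
  G.induce Sᶜ

/-- Restriction of a sign function to a set of vertices. -/
def σres {V : Type*} (σ : Sym2 V → ℝ) (s : Set V) : Sym2 s → ℝ :=
  fun e => σ (e.map Subtype.val)

/-- A signed graph is lower-optimal if `r + 2α = 2n - 2c`. -/
def lowerOptimal {V : Type*} [Fintype V] (G : SimpleGraph V) (σ : Sym2 V → ℝ) : Prop :=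
  srank G σ + 2 * _root_.indepNum G + 2 * cyclomatic G = 2 * Fintype.card V

lemma my_rank_add_le {V : Type*} [Fintype V] (A B : Matrix V V ℝ) :
    (A + B).rank ≤ A.rank + B.rank := by
  unfold Matrix.rank
  rw [Matrix.mulVecLin_add]
  have h : LinearMap.range (A.mulVecLin + B.mulVecLin) ≤
      LinearMap.range A.mulVecLin ⊔ LinearMap.range B.mulVecLin := by
    rintro x ⟨y, rfl⟩
    exact Submodule.add_mem_sup ⟨y, rfl⟩ ⟨y, rfl⟩
  exact (Submodule.finrank_mono h).trans
    (Submodule.finrank_add_le_finrank_add_finrank _ _)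

lemma my_rank_le_support {V : Type*} [Fintype V] (M : Matrix V V ℝ) (t : Finset V)
    (h : ∀ i, i ∉ t → M i = 0) : M.rank ≤ t.card := by
  classical
  let E : Matrix V t ℝ := Matrix.of fun i k => if i = (k : V) then 1 else 0
  have hM : M = E * (M.submatrix (Subtype.val) id : Matrix t V ℝ) := by
    ext i j
    simp only [Matrix.mul_apply, Matrix.submatrix_apply, id, E, Matrix.of_apply, ite_mul, one_mul, zero_mul]
    by_cases hi : i ∈ t
    · rw [Fintype.sum_eq_single (⟨i, hi⟩ : t)]
      · simp
      · intro k hk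
        rw [if_neg]
        intro hik
        exact hk (Subtype.ext hik.symm)
    · rw [h i hi]
      simp only [Pi.zero_apply]
      symm
      apply Finset.sum_eq_zero
      intro k _
      rw [if_neg]
      intro hik
      exact hi (hik ▸ k.2)
  calc M.rank = (E * (M.submatrix (Subtype.val) id : Matrix t V ℝ)).rank := by rw [← hM]
    _ ≤ (M.submatrix (Subtype.val) id).rank := Matrix.rank_mul_le_right _ _
    _ ≤ Fintype.card t := Matrix.rank_le_card_height _
    _ = t.card := Fintype.card_coe t

theorem rank_add_two_indepNum_le {V : Type*} [Fintype V] (G : SimpleGraph V)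
    (σ : Sym2 V → ℝ) (hσ : ∀ e ∈ G.edgeSet, σ e = 1 ∨ σ e = -1) :
    srank G σ + 2 * _root_.indepNum G ≤ 2 * Fintype.card V := by
  classical
  set A := sAdj G σ with hA
  -- obtain an independent set realizing the independence number
  have hne : ({n | ∃ s : Finset V, (∀ a ∈ s, ∀ b ∈ s, ¬ G.Adj a b) ∧ s.card = n} : Set ℕ).Nonempty :=
    ⟨0, ∅, by simp⟩
  have hbdd : BddAbove {n | ∃ s : Finset V, (∀ a ∈ s, ∀ b ∈ s, ¬ G.Adj a b) ∧ s.card = n} := by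
    refine ⟨Fintype.card V, ?_⟩
    rintro n ⟨s, -, rfl⟩
    exact s.card_le_univ.trans_eq (Finset.card_univ)
  obtain ⟨s, hs_ind, hs_card⟩ : _root_.indepNum G ∈
      {n | ∃ s : Finset V, (∀ a ∈ s, ∀ b ∈ s, ¬ G.Adj a b) ∧ s.card = n} :=
    Nat.sSup_mem hne hbdd
  -- split A into rows indexed by s and by sᶜ
  set B : Matrix V V ℝ := fun i j => if i ∈ s then 0 else A i j with hB
  set C : Matrix V V ℝ := fun i j => if i ∈ s then A i j else 0 with hC
  have hsum : A = B + C := by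
    funext i j
    rw [Matrix.add_apply]
    by_cases hi : i ∈ s <;> simp [hB, hC, hi]
  have hrankB : B.rank ≤ sᶜ.card := by
    apply my_rank_le_support
    intro i hi
    rw [Finset.mem_compl, not_not] at hi
    funext j
    simp [hB, hi]
  have hrankC : C.rank ≤ sᶜ.card := by
    rw [← Matrix.rank_transpose]
    apply my_rank_le_support
    intro j hj
    rw [Finset.mem_compl, not_not] at hj
    funext i
    rw [Matrix.transpose_apply]
    by_cases hi : i ∈ s
    · have : ¬ G.Adj i j := hs_ind i hi j hj
      simp [hC, hA, sAdj, hi, this, Matrix.transpose_apply]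
    · simp [hC, hi, Matrix.transpose_apply]
  have hrank : A.rank ≤ 2 * sᶜ.card := by
    calc A.rank = (B + C).rank := by rw [← hsum]
      _ ≤ B.rank + C.rank := my_rank_add_le _ _
      _ ≤ sᶜ.card + sᶜ.card := add_le_add hrankB hrankC
      _ = 2 * sᶜ.card := (two_mul _).symm
  have hcompl : sᶜ.card = Fintype.card V - s.card := Finset.card_compl s
  have hle : s.card ≤ Fintype.card V := s.card_le_univ.trans_eq Finset.card_univ
  have : srank G σ ≤ 2 * (Fintype.card V - s.card) := by
    rw [← hcompl]; exact hrank
  rw [← hs_card]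
  omega
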